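/- If two disjoint tubes T_i and T_j share an x-coordinate a at which T_j lies above T_i (every point of T_j with x-coordinate a has y-coordinate greater than every point of T_i with x-coordinate a), then for any two disjoint x-monotone connected paths p_i ⊆ T_i and p_j ⊆ T_j that each span their tube horizontally, the path p_j lies above p_i at every common x-coordinate of the two paths. -/

import Mathlib

open Set

/-- A vertical segment in the plane: {x} × [a,b]. -/
def VSeg (x a b : ℝ) : Set (ℝ × ℝ) := {x} ×ˢ Set.Icc a b

/-- A set of points in the plane is x-monotone if every vertical line meets it in
at most one point. -/
def XMonotone (P : Set (ℝ × ℝ)) : Prop := ∀ x : ℝ, {p ∈ P | p.1 = x}.Subsingleton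

/-- If two disjoint tubes share an x-coordinate `a` at which `Tⱼ` lies entirely above
`Tᵢ`, then for any two disjoint x-monotone connected paths, each spanning its own tube,
the path of `Tⱼ` lies above the path of `Tᵢ` at every common x-coordinate. -/
theorem disjoint_tubes_order_propagates
    (x₁ a₁ b₁ x₂ a₂ b₂ x₃ a₃ b₃ x₄ a₄ b₄ : ℝ)
    (hx₁₂ : x₁ ≠ x₂) (hx₃₄ : x₃ ≠ x₄)
    (h₁ : a₁ ≤ b₁) (h₂ : a₂ ≤ b₂) (h₃ : a₃ ≤ b₃) (h₄ : a₄ ≤ b₄)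
    (Ti Tj : Set (ℝ × ℝ))
    (hTi : Ti = convexHull ℝ (VSeg x₁ a₁ b₁ ∪ VSeg x₂ a₂ b₂))
    (hTj : Tj = convexHull ℝ (VSeg x₃ a₃ b₃ ∪ VSeg x₄ a₄ b₄))
    (hdisj : Disjoint Ti Tj)
    -- the tubes share the x-coordinate a, at which Tj lies above Ti:
    (a : ℝ)
    (hai : ∃ p ∈ Ti, p.1 = a) (haj : ∃ q ∈ Tj, q.1 = a)
    (habove : ∀ p ∈ Ti, ∀ q ∈ Tj, p.1 = a → q.1 = a → p.2 < q.2)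
    -- the two disjoint x-monotone connected paths spanning their tubes:
    (pi pj : Set (ℝ × ℝ))
    (hpiT : pi ⊆ Ti) (hpic : IsConnected pi) (hpim : XMonotone pi)
    (hpi1 : (pi ∩ VSeg x₁ a₁ b₁).Nonempty) (hpi2 : (pi ∩ VSeg x₂ a₂ b₂).Nonempty)
    (hpjT : pj ⊆ Tj) (hpjc : IsConnected pj) (hpjm : XMonotone pj)
    (hpj1 : (pj ∩ VSeg x₃ a₃ b₃).Nonempty) (hpj2 : (pj ∩ VSeg x₄ a₄ b₄).Nonempty)
    (hpdisj : Disjoint pi pj) :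
    ∀ b yi yj : ℝ, (b, yi) ∈ pi → (b, yj) ∈ pj → yi < yj := by
  have hVseg : ∀ x a b : ℝ, a ≤ b →
      VSeg x a b = convexHull ℝ {((x : ℝ), a), (x, b)} := by
    intro x a b hab
    rw [convexHull_pair]
    ext ⟨u, w⟩
    constructor
    · rintro ⟨hu, hw⟩
      have hu' : u = x := hu
      have hw' : w ∈ segment ℝ a b := by rw [segment_eq_Icc hab]; exact hw
      obtain ⟨s, t, hs, ht, hst, hw2⟩ := hw'
      refine ⟨s, t, hs, ht, hst, ?_⟩
      show (s * x + t * x, s * a + t * b) = (u, w)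
      simp only [Prod.mk.injEq]
      constructor
      · rw [← add_mul, hst, one_mul]; exact hu'.symm
      · simpa using hw2
    · rintro ⟨s, t, hs, ht, hst, hw⟩
      have hw' : (s * x + t * x, s * a + t * b) = (u, w) := hw
      simp only [Prod.mk.injEq] at hw'
      refine ⟨?_, ?_⟩
      · show u = x
        rw [← hw'.1, ← add_mul, hst, one_mul]
      · rw [← segment_eq_Icc hab]
        exact ⟨s, t, hs, ht, hst, by simpa using hw'.2⟩
  have hTic : IsCompact Ti := by
    rw [hTi, hVseg _ _ _ h₁, hVseg _ _ _ h₂, convexHull_convexHull_union_left,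
      convexHull_convexHull_union_right]
    exact Set.Finite.isCompact_convexHull ℝ
      (((Set.finite_singleton _).insert _).union ((Set.finite_singleton _).insert _))
  have hTjc : IsCompact Tj := by
    rw [hTj, hVseg _ _ _ h₃, hVseg _ _ _ h₄, convexHull_convexHull_union_left,
      convexHull_convexHull_union_right]
    exact Set.Finite.isCompact_convexHull ℝ
      (((Set.finite_singleton _).insert _).union ((Set.finite_singleton _).insert _))
  obtain ⟨f, u, v, hfi, huv, hfj⟩ :=
    geometric_hahn_banach_compact_closed (hTi ▸ convex_convexHull ℝ _) hTic
      (hTj ▸ convex_convexHull ℝ _) hTjc.isClosed hdisj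
  obtain ⟨p, hp, hpa⟩ := hai
  obtain ⟨q, hq, hqa⟩ := haj
  have hpq : p.2 < q.2 := habove p hp q hq hpa hqa
  have hf : ∀ x y y' : ℝ, f (x, y') - f (x, y) = (y' - y) * f (0, 1) := by
    intro x y y'
    rw [← map_sub]
    have h : ((x, y') - (x, y) : ℝ × ℝ) = (y' - y) • ((0 : ℝ), (1 : ℝ)) := by
      simp [Prod.ext_iff]
    rw [h, map_smul, smul_eq_mul]
  have h1 : f (p.1, p.2) < f (q.1, q.2) := by
    simpa using lt_trans (lt_trans (hfi p hp) huv) (hfj q hq)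
  have hc : 0 < f (0, 1) := by
    rw [hpa, hqa] at h1
    have := hf a p.2 q.2
    nlinarith
  intro b yi yj hbi hbj
  have h2 : f (b, yi) < f (b, yj) :=
    lt_trans (lt_trans (hfi _ (hpiT hbi)) huv) (hfj _ (hpjT hbj))
  have := hf b yi yj
  nlinarith
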